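/- Let (ŷ_{∞b},û_{∞b}) be an admissible pair on [0,+∞) for the backward dynamics −f (i.e. y(t) = y(0) − ∫₀ᵗ f(y(s),u(s)) ds) with ŷ_{∞b}(0) = z, whose trajectory is bounded (‖ŷ_{∞b}(t)‖ ≤ b for all t ≥ 0) and whose shifted costs ∫₀ᵀ w(ŷ_{∞b}(t),û_{∞b}(t)) dt are bounded uniformly in T ≥ 0. If strict dissipativity holds for the dynamics f, then ŷ_{∞b}(t) → ȳ as t → +∞. -/

import Mathlib

open MeasureTheory Filter Topology Metric Set

noncomputable section

/-- Euclidean state/control spaces. -/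
abbrev Euc (n : ℕ) := EuclideanSpace ℝ (Fin n)

/-- An admissible pair `(y,u)` on `[0,T]` for the dynamics `f` with control constraint set `Ω`:
`u` is measurable, `Ω`-valued a.e. on `[0,T]`, and `y t = y 0 + ∫₀ᵗ f (y s) (u s) ds` on `[0,T]`. -/
def IsAdmissible {n p : ℕ} (f : Euc n → Euc p → Euc n) (Ω : Set (Euc p)) (T : ℝ)
    (y : ℝ → Euc n) (u : ℝ → Euc p) : Prop :=
  Measurable u ∧ (∀ᵐ t ∂(volume.restrict (Icc (0:ℝ) T)), u t ∈ Ω) ∧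
  ∀ t ∈ Icc (0:ℝ) T, y t = y 0 + ∫ s in (0:ℝ)..t, f (y s) (u s)

/-- An admissible pair `(y,u)` on `[0,∞)` for the dynamics `f`. -/
def IsAdmissibleInf {n p : ℕ} (f : Euc n → Euc p → Euc n) (Ω : Set (Euc p))
    (y : ℝ → Euc n) (u : ℝ → Euc p) : Prop :=
  Measurable u ∧ (∀ᵐ t ∂(volume.restrict (Ici (0:ℝ))), u t ∈ Ω) ∧
  ∀ t, 0 ≤ t → y t = y 0 + ∫ s in (0:ℝ)..t, f (y s) (u s)

/-- A class-K function: continuous, (strictly) increasing on `[0,∞)`, nonnegative, vanishing at `0`. -/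
def IsClassK (α : ℝ → ℝ) : Prop :=
  ContinuousOn α (Ici 0) ∧ StrictMonoOn α (Ici 0) ∧ α 0 = 0 ∧ ∀ s ∈ Ici (0:ℝ), 0 ≤ α s

/-- Strict dissipativity at `(ȳ,ū)` with supply rate `w`, (bounded) storage function `S` and
class-K function `α`. -/
def StrictlyDissipative {n p : ℕ} (f : Euc n → Euc p → Euc n) (Ω : Set (Euc p))
    (w : Euc n → Euc p → ℝ) (ybar : Euc n) (ubar : Euc p)
    (S : Euc n → ℝ) (α : ℝ → ℝ) : Prop :=
  (∃ M, ∀ x, |S x| ≤ M) ∧ IsClassK α ∧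
  ∀ T > (0:ℝ), ∀ y u, IsAdmissible f Ω T y u →
    S (y T) + ∫ t in (0:ℝ)..T, α ‖(y t - ybar, u t - ubar)‖ ≤
      S (y 0) + ∫ t in (0:ℝ)..T, w (y t) (u t)

/-- The value function `v(T,x,z)` of the finite-horizon problem. -/
def valueFn {n p : ℕ} (f : Euc n → Euc p → Euc n) (f0 : Euc n → Euc p → ℝ)
    (Ω : Set (Euc p)) (T : ℝ) (x z : Euc n) : ℝ :=
  sInf {c | ∃ y u, IsAdmissible f Ω T y u ∧ y 0 = x ∧ y T = z ∧
    c = ∫ t in (0:ℝ)..T, f0 (y t) (u t)}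

/-- The value of the shifted infinite-horizon problem with dynamics `f`, running cost `w`
and initial state `x` (the cost of an admissible pair is the limit of its partial costs). -/
def vInf {n p : ℕ} (f : Euc n → Euc p → Euc n) (Ω : Set (Euc p))
    (w : Euc n → Euc p → ℝ) (x : Euc n) : ℝ :=
  sInf {c | ∃ y u, IsAdmissibleInf f Ω y u ∧ y 0 = x ∧
    Tendsto (fun T => ∫ t in (0:ℝ)..T, w (y t) (u t)) atTop (𝓝 c)}

/-- Times at which `ybar` can be reached from `x` by an admissible pair for `f`. -/
def reachTimes {n p : ℕ} (f : Euc n → Euc p → Euc n) (Ω : Set (Euc p))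
    (x ybar : Euc n) : Set ℝ :=
  {t | 0 ≤ t ∧ ∃ y u, IsAdmissible f Ω t y u ∧ y 0 = x ∧ y t = ybar}

/-- The minimum time to reach `ybar` from `x` with the dynamics `f`. -/
def minTime {n p : ℕ} (f : Euc n → Euc p → Euc n) (Ω : Set (Euc p))
    (x ybar : Euc n) : ℝ :=
  sInf (reachTimes f Ω x ybar)

/-- Corollary 5.6: the same convergence holds for a bounded admissible trajectory
of the backward-in-time dynamics `−f` with uniformly bounded shifted costs. -/
theorem infinite_horizon_backward_trajectory_tendsto_turnpike
    {n pp : ℕ} (c : ℝ)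
    (f : Euc n → Euc pp → Euc n) (f0 : Euc n → Euc pp → ℝ)
    (Ω : Set (Euc pp))
    (hf : ContDiff ℝ 1 (Function.uncurry f))
    (hf0 : ContDiff ℝ 1 (Function.uncurry f0))
    (hΩcpt : IsCompact Ω) (hΩball : Ω ⊆ closedBall 0 c)
    -- (ȳ,ū) is the unique minimizer of the static problem
    (ybar : Euc n) (ubar : Euc pp)
    (hfbar : f ybar ubar = 0)
    (hstatmin : ∀ y u, f y u = 0 → f0 ybar ubar ≤ f0 y u)
    (hstatuniq : ∀ y u, f y u = 0 → f0 y u = f0 ybar ubar → y = ybar ∧ u = ubar)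
    -- shifted cost
    (w : Euc n → Euc pp → ℝ) (hwdef : w = fun y u => f0 y u - f0 ybar ubar)
    (z : Euc n)
    (yb : ℝ → Euc n) (ub : ℝ → Euc pp)
    (hadm : IsAdmissibleInf (fun a b => -f a b) Ω yb ub) (hz0 : yb 0 = z)
    (b : ℝ) (hbnd : ∀ t, 0 ≤ t → ‖yb t‖ ≤ b)
    (M : ℝ) (hcst : ∀ T, 0 ≤ T → |∫ t in (0:ℝ)..T, w (yb t) (ub t)| ≤ M)
    (S : Euc n → ℝ) (α : ℝ → ℝ)
    (hdis : StrictlyDissipative f Ω w ybar ubar S α) :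
    Tendsto yb atTop (𝓝 ybar) := by
  
  classical
  obtain ⟨⟨Ms, hMs⟩, ⟨hαcont, hαmono, hα0, hαnn⟩, hdiss⟩ := hdis
  obtain ⟨hub_meas, hub_mem, hyint0⟩ := hadm
  set g : ℝ → Euc n := fun s => f (yb s) (ub s) with hgdef
  have hyint : ∀ t, 0 ≤ t → yb t = yb 0 + ∫ s in (0:ℝ)..t, -(g s) := hyint0
  -- uniform bound on the vector field along the trajectory
  have hb0 : (0:ℝ) ≤ b := le_trans (norm_nonneg _) (hbnd 0 le_rfl)
  obtain ⟨C₀, hC₀⟩ := ((isCompact_closedBall (0:Euc n) b).prod hΩcpt).exists_bound_of_continuousOn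
      (hf.continuous.continuousOn)
  set C : ℝ := max C₀ 1 with hCdef
  have hC1 : (1:ℝ) ≤ C := le_max_right _ _
  have hC0 : (0:ℝ) < C := lt_of_lt_of_le one_pos hC1
  have hgbd : ∀ s, 0 ≤ s → ub s ∈ Ω → ‖g s‖ ≤ C := by
    intro s hs hm
    refine le_trans ?_ (le_max_left _ _)
    exact hC₀ (yb s, ub s) ⟨mem_closedBall_zero_iff.2 (hbnd s hs), hm⟩
  have hub_glob : ∀ᵐ t ∂(volume : Measure ℝ), t ∈ Ici (0:ℝ) → ub t ∈ Ω :=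
    (ae_restrict_iff' measurableSet_Ici).mp hub_mem
  have hg_glob : ∀ᵐ s ∂(volume : Measure ℝ), 0 ≤ s → ‖g s‖ ≤ C := by
    filter_upwards [hub_glob] with s hm hs
    exact hgbd s hs (hm hs)
  -- Lipschitz estimate, given integrability
  have hlip : ∀ s t : ℝ, 0 ≤ s → s ≤ t → IntervalIntegrable g volume 0 t →
      ‖yb t - yb s‖ ≤ C * (t - s) := by
    intro s t hs hst hint
    have ht : (0:ℝ) ≤ t := hs.trans hst
    have h1 : IntervalIntegrable g volume 0 s :=
      hint.mono_set (by rw [uIcc_of_le hs, uIcc_of_le ht]; exact Icc_subset_Icc le_rfl hst)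
    have h2 : IntervalIntegrable g volume s t :=
      hint.mono_set (by rw [uIcc_of_le hst, uIcc_of_le ht]; exact Icc_subset_Icc hs le_rfl)
    have hadd : (∫ x in (0:ℝ)..s, -(g x)) + ∫ x in s..t, -(g x) = ∫ x in (0:ℝ)..t, -(g x) :=
      intervalIntegral.integral_add_adjacent_intervals h1.neg h2.neg
    have hyd : yb t - yb s = ∫ x in s..t, -(g x) := by
      rw [hyint t ht, hyint s hs]
      rw [← hadd]; abel
    rw [hyd]
    have hb : ‖∫ x in s..t, -(g x)‖ ≤ C * |t - s| := by
      apply intervalIntegral.norm_integral_le_of_norm_le_const_ae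
      filter_upwards [hg_glob] with x hx hxm
      rw [Set.uIoc_of_le hst] at hxm
      rw [norm_neg]
      exact hx (hs.trans hxm.1.le)
    rwa [abs_of_nonneg (sub_nonneg.2 hst)] at hb
  -- integrability of g on every [0,T]
  have hII : ∀ T : ℝ, 0 ≤ T → IntervalIntegrable g volume 0 T := by
    by_contra hcon
    push_neg at hcon
    obtain ⟨T₀, hT₀, hT₀bad⟩ := hcon
    set Bad : Set ℝ := {T | 0 ≤ T ∧ ¬ IntervalIntegrable g volume 0 T} with hBadDef
    have hBadne : Bad.Nonempty := ⟨T₀, hT₀, hT₀bad⟩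
    have hBadbdd : BddBelow Bad := ⟨0, fun x hx => hx.1⟩
    set a : ℝ := sInf Bad with haDef
    have ha0 : 0 ≤ a := le_csInf hBadne (fun x hx => hx.1)
    have hgood : ∀ t, 0 ≤ t → t < a → IntervalIntegrable g volume 0 t := by
      intro t ht hta
      by_contra hbad
      exact absurd (csInf_le hBadbdd ⟨ht, hbad⟩) (not_le.2 hta)
    have hbadz : ∀ t, t ∈ Bad → yb t = yb 0 := by
      intro t ht
      have : ¬ IntervalIntegrable (fun s => -(g s)) volume 0 t := by
        intro h
        exact ht.2 (by simpa [Pi.neg_def] using h.neg)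
      rw [hyint t ht.1, intervalIntegral.integral_undef this, add_zero]
    have hIoibad : ∀ t, a < t → yb t = yb 0 := by
      intro t hat
      obtain ⟨x, hx, hxt⟩ := (csInf_lt_iff hBadbdd hBadne).mp hat
      refine hbadz t ⟨hx.1.trans hxt.le, ?_⟩
      intro h
      refine hx.2 (h.mono_set ?_)
      rw [uIcc_of_le hx.1, uIcc_of_le (hx.1.trans hxt.le)]
      exact Icc_subset_Icc le_rfl hxt.le
    -- yb is continuous on [0,a)
    have hcont : ContinuousOn yb (Ico 0 a) := by
      have : LipschitzOnWith ⟨C, hC0.le⟩ yb (Ico 0 a) := by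
        apply LipschitzOnWith.of_dist_le_mul
        intro x hx y hy
        rcases le_total x y with h | h
        · rw [dist_eq_norm, Real.dist_eq, norm_sub_rev, abs_of_nonpos (sub_nonpos.2 h), neg_sub]
          exact hlip x y hx.1 h (hgood y hy.1 hy.2)
        · rw [dist_eq_norm, Real.dist_eq, abs_of_nonneg (sub_nonneg.2 h)]
          exact hlip y x hy.1 h (hgood x hx.1 hx.2)
      exact this.continuousOn
    have hyb_ae : AEMeasurable yb (volume.restrict (Ici (0:ℝ))) := by
      have hdecomp : Ici (0:ℝ) = Icc 0 a ∪ Ioi a := (Icc_union_Ioi_eq_Ici ha0).symm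
      rw [hdecomp, aemeasurable_union_iff]
      constructor
      · have hres : volume.restrict (Icc (0:ℝ) a) = volume.restrict (Ico (0:ℝ) a) :=
          (Measure.restrict_congr_set Ico_ae_eq_Icc).symm
        rw [hres]
        exact hcont.aemeasurable measurableSet_Ico
      · refine (aemeasurable_const (b := yb 0)).congr ?_
        filter_upwards [ae_restrict_mem measurableSet_Ioi] with t ht
        exact (hIoibad t ht).symm
    have hg_ae : AEMeasurable g (volume.restrict (Ici (0:ℝ))) :=
      (hf.continuous.measurable.comp_aemeasurable (hyb_ae.prodMk
        hub_meas.aemeasurable.restrict))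
    have : IntervalIntegrable g volume 0 T₀ := by
      rw [intervalIntegrable_iff]
      have hsub : uIoc (0:ℝ) T₀ ⊆ Ici 0 := by
        rw [uIoc_of_le hT₀]; exact Ioc_subset_Icc_self.trans (Icc_subset_Ici_self)
      refine Integrable.mono' (g := fun _ => C) ?_ ?_ ?_
      · exact intervalIntegrable_iff.mp intervalIntegrable_const
      · exact (hg_ae.mono_measure (Measure.restrict_mono hsub le_rfl)).aestronglyMeasurable
      · have := ae_restrict_of_ae (μ := volume) (s := uIoc (0:ℝ) T₀) hg_glob
        filter_upwards [this, ae_restrict_mem (measurableSet_uIoc)] with s hs hmem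
        exact hs (hsub hmem).out
    exact hT₀bad this
  
  -- full Lipschitz estimate and continuity on [0, ∞)
  have hlip2 : ∀ s t : ℝ, 0 ≤ s → 0 ≤ t → ‖yb t - yb s‖ ≤ C * |t - s| := by
    intro s t hs ht
    rcases le_total s t with h | h
    · rw [abs_of_nonneg (sub_nonneg.2 h)]; exact hlip s t hs h (hII t ht)
    · rw [abs_of_nonpos (sub_nonpos.2 h), norm_sub_rev, neg_sub]
      exact hlip t s ht h (hII s hs)
  have hybcont : ContinuousOn yb (Ici 0) := by
    have : LipschitzOnWith ⟨C, hC0.le⟩ yb (Ici 0) := by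
      apply LipschitzOnWith.of_dist_le_mul
      intro x hx y hy
      rw [dist_eq_norm, Real.dist_eq]
      exact hlip2 y x hy hx
    exact this.continuousOn
  have hyb_ae : AEMeasurable yb (volume.restrict (Ici (0:ℝ))) :=
    hybcont.aemeasurable measurableSet_Ici
  -- the modified class-K function
  set α' : ℝ → ℝ := fun s => α (max s 0) with hα'def
  have hα'cont : Continuous α' :=
    hαcont.comp_continuous (continuous_id.max continuous_const) (fun x => mem_Ici.2 (le_max_right _ _))
  have hα'eq : ∀ s : ℝ, 0 ≤ s → α' s = α s := by
    intro s hs; simp only [hα'def]; rw [max_eq_left hs]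
  have hα'mono : ∀ s t : ℝ, 0 ≤ s → s ≤ t → α' s ≤ α' t := by
    intro s t hs hst
    rw [hα'eq s hs, hα'eq t (hs.trans hst)]
    exact hαmono.monotoneOn (mem_Ici.2 hs) (mem_Ici.2 (hs.trans hst)) hst
  have hα'nn : ∀ s : ℝ, 0 ≤ α' s := fun s => hαnn _ (mem_Ici.2 (le_max_right _ _))
  -- nonemptiness of Ω and bounds
  have hΩne : Ω.Nonempty := by
    by_contra hne
    rw [not_nonempty_iff_eq_empty] at hne
    haveI : (ae (volume.restrict (Ici (0:ℝ)))).NeBot := by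
      refine ae_neBot.2 ?_
      simp [Measure.restrict_eq_zero, Real.volume_Ici]
    have hF : ∀ᵐ t ∂(volume.restrict (Ici (0:ℝ))), False := by
      filter_upwards [hub_mem] with t ht
      simp [hne] at ht
    exact hF.exists.elim (fun t ht => ht)
  have hc0 : (0:ℝ) ≤ c := by
    obtain ⟨x, hx⟩ := hΩne
    exact nonempty_closedBall.mp ⟨x, hΩball hx⟩
  set R : ℝ := max (b + ‖ybar‖) (c + ‖ubar‖) with hRdef
  have hpairbd : ∀ᵐ t ∂(volume : Measure ℝ), 0 ≤ t → ‖(yb t - ybar, ub t - ubar)‖ ≤ R := by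
    filter_upwards [hub_glob] with t hm ht
    have h1 : ‖yb t - ybar‖ ≤ b + ‖ybar‖ :=
      (norm_sub_le _ _).trans (add_le_add_left (hbnd t ht) _)
    have h2 : ‖ub t - ubar‖ ≤ c + ‖ubar‖ :=
      (norm_sub_le _ _).trans (add_le_add_left
        (mem_closedBall_zero_iff.mp (hΩball (hm ht))) _)
    rw [Prod.norm_def]
    exact max_le_max h1 h2
  -- integrability of the dissipation-rate integrand
  have hfun_eq : (fun t => α ‖(yb t - ybar, ub t - ubar)‖)
      = fun t => α' ‖(yb t - ybar, ub t - ubar)‖ :=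
    funext fun t => (hα'eq _ (norm_nonneg _)).symm
  have hhII : ∀ T : ℝ, 0 ≤ T →
      IntervalIntegrable (fun t => α ‖(yb t - ybar, ub t - ubar)‖) volume 0 T := by
    intro T hT
    rw [intervalIntegrable_iff]
    have hsub : uIoc (0:ℝ) T ⊆ Ici 0 := by
      rw [uIoc_of_le hT]; exact Ioc_subset_Icc_self.trans Icc_subset_Ici_self
    have hpair_ae : AEMeasurable (fun t => (yb t - ybar, ub t - ubar))
        (volume.restrict (uIoc (0:ℝ) T)) := by
      refine AEMeasurable.prodMk ?_ ?_
      · exact ((hyb_ae.mono_measure (Measure.restrict_mono hsub le_rfl)).sub aemeasurable_const)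
      · exact (hub_meas.aemeasurable.sub aemeasurable_const).restrict
    refine Integrable.mono' (g := fun _ => α' R) ?_ ?_ ?_
    · exact intervalIntegrable_iff.mp intervalIntegrable_const
    · rw [hfun_eq]
      exact ((hα'cont.comp continuous_norm).measurable.comp_aemeasurable
        hpair_ae).aestronglyMeasurable
    · have := ae_restrict_of_ae (μ := volume) (s := uIoc (0:ℝ) T) hpairbd
      filter_upwards [this, ae_restrict_mem measurableSet_uIoc] with t h1 h2
      have ht0 : (0:ℝ) ≤ t := (hsub h2).out
      rw [Real.norm_eq_abs, abs_of_nonneg (hαnn _ (mem_Ici.2 (norm_nonneg _)))]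
      rw [← hα'eq _ (norm_nonneg _)]
      exact hα'mono _ _ (norm_nonneg _) (h1 ht0)
  -- nonnegativity bounds for constants
  have hMs0 : (0:ℝ) ≤ Ms := (abs_nonneg _).trans (hMs ybar)
  have hM0 : (0:ℝ) ≤ M := by
    have h := hcst 0 le_rfl
    exact (abs_nonneg _).trans h
  -- key dissipation bound from the reversed trajectory
  have hkey : ∀ T : ℝ, 0 < T →
      ∫ t in (0:ℝ)..T, α ‖(yb t - ybar, ub t - ubar)‖ ≤ 2*Ms + M := by
    intro T hT
    have hT0 : (0:ℝ) ≤ T := hT.le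
    set yT : ℝ → Euc n := fun t => yb (T - t) with hyT
    set uT : ℝ → Euc pp := fun t => ub (T - t) with huT
    have hadmT : IsAdmissible f Ω T yT uT := by
      refine ⟨hub_meas.comp (measurable_const.sub measurable_id), ?_, ?_⟩
      · have hrev := (Measure.measurePreserving_sub_left (volume : Measure ℝ)
          T).quasiMeasurePreserving.ae hub_glob
        have h2 := ae_restrict_of_ae (μ := volume) (s := Icc (0:ℝ) T) hrev
        filter_upwards [h2, ae_restrict_mem measurableSet_Icc] with t h1 hmem
        exact h1 (mem_Ici.2 (sub_nonneg.2 hmem.2))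
      · intro t ht
        have htT : 0 ≤ T - t := sub_nonneg.2 ht.2
        have h1 : IntervalIntegrable (fun s => -(g s)) volume 0 (T - t) := (hII (T-t) htT).neg
        have h2 : IntervalIntegrable (fun s => -(g s)) volume (T-t) T := by
          refine ((hII T hT0).neg).mono_set ?_
          rw [uIcc_of_le (show T - t ≤ T by linarith [ht.1]), uIcc_of_le hT0]
          exact Icc_subset_Icc htT le_rfl
        have hadd := intervalIntegral.integral_add_adjacent_intervals h1 h2
        have hcomp : (∫ s in (0:ℝ)..t, f (yT s) (uT s)) = ∫ s in (T-t)..T, g s := by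
          have h3 := intervalIntegral.integral_comp_sub_left (a := 0) (b := t) g T
          simpa [hyT, huT, sub_zero, hgdef] using h3
        show yb (T - t) = yb (T - 0) + _
        rw [hcomp, sub_zero, hyint T hT0, hyint (T-t) htT, ← hadd]
        simp only [intervalIntegral.integral_neg]
        abel
    have hD := hdiss T hT yT uT hadmT
    have hyT0 : yT 0 = yb T := by simp [hyT]
    have hyTT : yT T = yb 0 := by simp [hyT]
    have hα_comp : (∫ t in (0:ℝ)..T, α ‖(yT t - ybar, uT t - ubar)‖)
        = ∫ t in (0:ℝ)..T, α ‖(yb t - ybar, ub t - ubar)‖ := by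
      have h3 := intervalIntegral.integral_comp_sub_left (a := 0) (b := T)
        (fun s => α ‖(yb s - ybar, ub s - ubar)‖) T
      simpa [hyT, huT, sub_zero] using h3
    have hw_comp : (∫ t in (0:ℝ)..T, w (yT t) (uT t)) = ∫ t in (0:ℝ)..T, w (yb t) (ub t) := by
      have h3 := intervalIntegral.integral_comp_sub_left (a := 0) (b := T)
        (fun s => w (yb s) (ub s)) T
      simpa [hyT, huT, sub_zero] using h3
    rw [hyT0, hyTT, hα_comp, hw_comp] at hD
    have h1 : ∫ t in (0:ℝ)..T, w (yb t) (ub t) ≤ M := (le_abs_self _).trans (hcst T hT0)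
    have h2 := (abs_le.1 (hMs (yb 0))).1
    have h3 := (abs_le.1 (hMs (yb T))).2
    linarith
  -- the comparison function φ
  set φ : ℝ → ℝ := fun t => α' ‖yb (max t 0) - ybar‖ with hφdef
  have hinner : Continuous fun t : ℝ => yb (max t 0) :=
    hybcont.comp_continuous (continuous_id.max continuous_const)
      (fun x => mem_Ici.2 (le_max_right _ _))
  have hφcont : Continuous φ :=
    hα'cont.comp (continuous_norm.comp (hinner.sub continuous_const))
  have hφII : ∀ u v : ℝ, IntervalIntegrable φ volume u v :=
    fun u v => hφcont.intervalIntegrable u v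
  have hφnn : ∀ t, 0 ≤ φ t := fun t => hα'nn _
  have hφbound : ∀ T : ℝ, 0 ≤ T → ∫ t in (0:ℝ)..T, φ t ≤ 2*Ms + M := by
    intro T hT0
    rcases hT0.eq_or_lt with h | hT
    · rw [← h, intervalIntegral.integral_same]; linarith
    have hle : ∫ t in (0:ℝ)..T, φ t ≤ ∫ t in (0:ℝ)..T, α ‖(yb t - ybar, ub t - ubar)‖ := by
      refine intervalIntegral.integral_mono_on hT0 (hφII 0 T) (hhII T hT0) ?_
      intro t htm
      have ht0 : (0:ℝ) ≤ t := htm.1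
      have heq : φ t = α' ‖yb t - ybar‖ := by
        simp only [hφdef]; rw [max_eq_left ht0]
      rw [heq, ← hα'eq _ (norm_nonneg _)]
      exact hα'mono _ _ (norm_nonneg _) (norm_fst_le (yb t - ybar, ub t - ubar))
    exact hle.trans (hkey T hT)
  set Fint : ℝ → ℝ := fun T => ∫ t in (0:ℝ)..T, φ t with hFdef
  have hFmono : Monotone Fint := by
    intro T T' h
    have hsplit : Fint T' = Fint T + ∫ t in T..T', φ t :=
      (intervalIntegral.integral_add_adjacent_intervals (hφII 0 T) (hφII T T')).symm
    rw [hsplit]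
    exact le_add_of_nonneg_right (intervalIntegral.integral_nonneg h (fun x _ => hφnn x))
  have hFbdd : BddAbove (Set.range Fint) := by
    refine ⟨2*Ms + M, ?_⟩
    rintro _ ⟨T, rfl⟩
    rcases le_or_gt 0 T with h | h
    · exact hφbound T h
    · have : Fint T ≤ Fint 0 := hFmono h.le
      have h0 : Fint 0 = 0 := intervalIntegral.integral_same
      rw [h0] at this
      linarith
  have hFtend := tendsto_atTop_ciSup hFmono hFbdd
  -- conclude by contradiction
  by_contra hnot
  rw [Metric.tendsto_atTop] at hnot
  push_neg at hnot
  obtain ⟨ε, hε, hfar⟩ := hnot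
  set δ : ℝ := ε / (2*C) with hδdef
  have hδpos : 0 < δ := div_pos hε (by positivity)
  have hαhalf : 0 < α (ε/2) := by
    have h := hαmono (mem_Ici.2 le_rfl) (mem_Ici.2 (half_pos hε).le) (half_pos hε)
    rwa [hα0] at h
  have hjump : ∀ t : ℝ, 0 ≤ t → ε ≤ dist (yb t) ybar →
      δ * α (ε/2) ≤ Fint (t+δ) - Fint t := by
    intro t ht hdist
    have hlo : ∀ s ∈ Icc t (t+δ), α (ε/2) ≤ φ s := by
      intro s hs
      have hs0 : 0 ≤ s := ht.trans hs.1
      have hub2 : ‖yb s - yb t‖ ≤ ε/2 := by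
        have h4 := hlip2 t s ht hs0
        have habs : |s - t| ≤ δ := by
          rw [abs_of_nonneg (sub_nonneg.2 hs.1)]; linarith [hs.2]
        have h5 : C * |s - t| ≤ C * δ := by nlinarith
        have h6 : C * δ = ε/2 := by
          rw [hδdef]; field_simp
        linarith
      have hlow : ε/2 ≤ ‖yb s - ybar‖ := by
        have h1 : ε ≤ ‖yb t - ybar‖ := by rwa [dist_eq_norm] at hdist
        have h2 : ‖yb t - ybar‖ ≤ ‖yb t - yb s‖ + ‖yb s - ybar‖ :=
          norm_sub_le_norm_sub_add_norm_sub _ _ _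
        have h3 : ‖yb t - yb s‖ = ‖yb s - yb t‖ := norm_sub_rev _ _
        linarith
      have heq : φ s = α' ‖yb s - ybar‖ := by
        simp only [hφdef]; rw [max_eq_left hs0]
      rw [heq, ← hα'eq (ε/2) (half_pos hε).le]
      exact hα'mono _ _ (half_pos hε).le hlow
    have hInt : Fint (t+δ) - Fint t = ∫ s in t..(t+δ), φ s := by
      have hsplit : Fint (t+δ) = Fint t + ∫ s in t..(t+δ), φ s :=
        (intervalIntegral.integral_add_adjacent_intervals (hφII 0 t) (hφII t (t+δ))).symm
      rw [hsplit]; ring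
    rw [hInt]
    have hconst : ∫ s in t..(t+δ), (fun _ => α (ε/2)) s = δ * α (ε/2) := by
      rw [intervalIntegral.integral_const]
      simp [smul_eq_mul]
    rw [← hconst]
    exact intervalIntegral.integral_mono_on (by linarith) intervalIntegrable_const
      (hφII t (t+δ)) hlo
  have htend0 : Tendsto (fun T => Fint (T+δ) - Fint T) atTop (𝓝 0) := by
    have h1 : Tendsto (fun T => Fint (T+δ)) atTop (𝓝 (⨆ i, Fint i)) :=
      hFtend.comp (tendsto_atTop_add_const_right atTop δ tendsto_id)
    simpa using h1.sub hFtend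
  have hev : ∀ᶠ T in atTop, Fint (T+δ) - Fint T < δ * α (ε/2) :=
    htend0.eventually_lt_const (mul_pos hδpos hαhalf)
  have hfreq : ∃ᶠ T in atTop, (0 ≤ T ∧ ε ≤ dist (yb T) ybar) := by
    rw [frequently_atTop]
    intro N
    obtain ⟨t, ht1, ht2⟩ := hfar (max N 0)
    exact ⟨t, le_trans (le_max_left _ _) ht1, le_trans (le_max_right _ _) ht1, ht2⟩
  obtain ⟨T, ⟨hT0c, hTfar⟩, hTlt⟩ := (hfreq.and_eventually hev).exists
  exact absurd (hjump T hT0c hTfar) (not_le.2 hTlt)
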